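/- For n ≥ 4, Γⁿ is a complete set of 𝒮†₁(Pⁿ)-formulas: for every 𝒮†₁-formula φ over the atoms p₀,…,p_{2n−1}, q₀,…,q_{2n+1}, either φ ∈ Γⁿ or φ̄ ∈ Γⁿ. Moreover, Γⁿ contains no absurdity ∃_{>i}(p, p̄). -/

import Mathlib

/-- Literals over a set of atoms `P`: an atom or a negated atom. -/
inductive Lit (P : Type) : Type
  | pos (p : P)
  | neg (p : P)
deriving DecidableEq

/-- Formulas of the (extended) numerical syllogistic: `∃_{≤ i}(ℓ,m)` and `∃_{> i}(ℓ,m)`. -/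
inductive Fm (P : Type) : Type
  | le (i : ℕ) (l m : Lit P)
  | gt (i : ℕ) (l m : Lit P)
deriving DecidableEq

/-- Interpretation of a literal in a structure with domain `A` given by `I`. -/
def Lit.interp {P A : Type} (I : P → Set A) : Lit P → Set A
  | .pos p => I p
  | .neg p => (I p)ᶜ

/-- Truth of a formula in a structure: cardinality constraints on `ℓ^𝔄 ∩ m^𝔄`. -/
def Fm.sat {P A : Type} (I : P → Set A) : Fm P → Prop
  | .le i l m => Cardinal.mk ↥(l.interp I ∩ m.interp I) ≤ (i : Cardinal)
  | .gt i l m => (i : Cardinal) < Cardinal.mk ↥(l.interp I ∩ m.interp I)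

/-- Semantic entailment: every structure (nonempty domain) satisfying `Θ` satisfies `ψ`. -/
def Entails {P : Type} (Θ : Set (Fm P)) (ψ : Fm P) : Prop :=
  ∀ (A : Type) (_ : Nonempty A) (I : P → Set A), (∀ φ ∈ Θ, φ.sat I) → ψ.sat I

/-- The negation map, swapping `∃_{≤ i}` and `∃_{> i}`. -/
def Fm.negate {P : Type} : Fm P → Fm P
  | .le i l m => .gt i l m
  | .gt i l m => .le i l m

/-- Swap the (unordered) arguments of a formula. -/
def Fm.swap {P : Type} : Fm P → Fm P
  | .le i l m => .le i m l
  | .gt i l m => .gt i m l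

/-- The numerical index of a formula. -/
def Fm.idx {P : Type} : Fm P → ℕ
  | .le i _ _ => i
  | .gt i _ _ => i

/-- The atom of a literal. -/
def Lit.atom {P : Type} : Lit P → P
  | .pos p => p
  | .neg p => p

/-- The two (unordered) literal arguments of a formula. -/
def Fm.args {P : Type} : Fm P → Lit P × Lit P
  | .le _ l m => (l, m)
  | .gt _ l m => (l, m)

/-- All atoms of a formula lie in `S`. -/
def Fm.atomsIn {P : Type} (S : Set P) (φ : Fm P) : Prop :=
  φ.args.1.atom ∈ S ∧ φ.args.2.atom ∈ S

/-- Applying a substitution to a literal. -/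
def Lit.map {P : Type} (g : P → P) : Lit P → Lit P
  | .pos p => .pos (g p)
  | .neg p => .neg (g p)

/-- Applying a substitution to a formula. -/
def Fm.map {P : Type} (g : P → P) : Fm P → Fm P
  | .le i l m => .le i (l.map g) (m.map g)
  | .gt i l m => .gt i (l.map g) (m.map g)

/-- A syllogistic rule: a finite set of antecedents and a consequent. -/
structure Rule (P : Type) where
  ants : Finset (Fm P)
  con : Fm P

/-- The direct syllogistic derivation relation `⊢_X`. -/
inductive Derives {P : Type} (X : Set (Rule P)) : Set (Fm P) → Fm P → Prop
  | prem {Θ : Set (Fm P)} {θ : Fm P} : θ ∈ Θ → Derives X Θ θ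
  | rule {Θ : Set (Fm P)} (r : Rule P) (g : P → P) : r ∈ X →
      (∀ ψ ∈ r.ants, Derives X Θ (ψ.map g)) → Derives X Θ (r.con.map g)

/-- The indirect syllogistic derivation relation `⊩_X` (with reductio ad absurdum). -/
inductive IndDerives {P : Type} (X : Set (Rule P)) : Set (Fm P) → Fm P → Prop
  | prem {Θ : Set (Fm P)} {θ : Fm P} : θ ∈ Θ → IndDerives X Θ θ
  | rule {Θ : Set (Fm P)} (r : Rule P) (g : P → P) : r ∈ X →
      (∀ ψ ∈ r.ants, IndDerives X Θ (ψ.map g)) → IndDerives X Θ (r.con.map g)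
  | raa {Θ : Set (Fm P)} {θ : Fm P} (i : ℕ) (p : P) :
      IndDerives X (insert θ Θ) (Fm.gt i (Lit.pos p) (Lit.neg p)) →
      IndDerives X Θ θ.negate
/-- Atoms `p₀,…` (left) and `q₀,…` (right). -/
abbrev SAtom : Type := Sum ℕ ℕ

def pL (i : ℕ) : Lit SAtom := Lit.pos (Sum.inl i)
def pN (i : ℕ) : Lit SAtom := Lit.neg (Sum.inl i)
def qL (j : ℕ) : Lit SAtom := Lit.pos (Sum.inr j)
def qN (j : ℕ) : Lit SAtom := Lit.neg (Sum.inr j)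

/-- Membership in the set `Γⁿ` of `𝒮†₁`-formulas (groups (3)–(19) of the paper);
formulas are identified up to the order of their arguments via `symm`. -/
inductive GammaMem (n : ℕ) : Fm SAtom → Prop
  -- (3): ∃*_{=1}(p_i, p_{i+1}), 0 ≤ i ≤ 2n−2
  | pp1a {i : ℕ} : i ≤ 2*n-2 → GammaMem n (.gt 0 (pL i) (pL (i+1)))
  | pp1b {i : ℕ} : i ≤ 2*n-2 → GammaMem n (.le 1 (pL i) (pL (i+1)))
  -- (4): ∃*_{=1}(p_i, p_{i+3}), i even, 0 ≤ i ≤ 2n−4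
  | pp2a {i : ℕ} : Even i → i ≤ 2*n-4 → GammaMem n (.gt 0 (pL i) (pL (i+3)))
  | pp2b {i : ℕ} : Even i → i ≤ 2*n-4 → GammaMem n (.le 1 (pL i) (pL (i+3)))
  -- (5): ∃*_{≤0}(p₀, p_{2n−1})
  | pp3a : GammaMem n (.le 0 (pL 0) (pL (2*n-1)))
  | pp3b : GammaMem n (.le 1 (pL 0) (pL (2*n-1)))
  -- (6): ∃*_{>1}(p_i, p_j)
  | pp4a {i j : ℕ} : i ≤ j → j ≤ 2*n-1 → j ≠ i+1 → (Odd i ∨ j ≠ i+3) →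
      (i ≠ 0 ∨ j ≠ 2*n-1) → GammaMem n (.gt 0 (pL i) (pL j))
  | pp4b {i j : ℕ} : i ≤ j → j ≤ 2*n-1 → j ≠ i+1 → (Odd i ∨ j ≠ i+3) →
      (i ≠ 0 ∨ j ≠ 2*n-1) → GammaMem n (.gt 1 (pL i) (pL j))
  -- (7): ∃*_{≤0}(p_i, p̄_i)
  | pp5a {i : ℕ} : i ≤ 2*n-1 → GammaMem n (.le 0 (pL i) (pN i))
  | pp5b {i : ℕ} : i ≤ 2*n-1 → GammaMem n (.le 1 (pL i) (pN i))
  -- (8): ∃*_{>1}(p_i, p̄_j), i ≠ j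
  | pp6a {i j : ℕ} : i ≤ 2*n-1 → j ≤ 2*n-1 → i ≠ j → GammaMem n (.gt 0 (pL i) (pN j))
  | pp6b {i j : ℕ} : i ≤ 2*n-1 → j ≤ 2*n-1 → i ≠ j → GammaMem n (.gt 1 (pL i) (pN j))
  -- (9): ∃*_{>1}(p̄_i, p̄_j)
  | pp7a {i j : ℕ} : i ≤ j → j ≤ 2*n-1 → GammaMem n (.gt 0 (pN i) (pN j))
  | pp7b {i j : ℕ} : i ≤ j → j ≤ 2*n-1 → GammaMem n (.gt 1 (pN i) (pN j))
  -- (10): ∃*_{=1}(q_i, q_{i+1}), i even, 0 ≤ i ≤ 2n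
  | qq1a {i : ℕ} : Even i → i ≤ 2*n → GammaMem n (.gt 0 (qL i) (qL (i+1)))
  | qq1b {i : ℕ} : Even i → i ≤ 2*n → GammaMem n (.le 1 (qL i) (qL (i+1)))
  -- (11): ∃*_{>1}(q_i, q_j)
  | qq2a {i j : ℕ} : i ≤ j → j ≤ 2*n+1 → (Odd i ∨ j ≠ i+1) → GammaMem n (.gt 0 (qL i) (qL j))
  | qq2b {i j : ℕ} : i ≤ j → j ≤ 2*n+1 → (Odd i ∨ j ≠ i+1) → GammaMem n (.gt 1 (qL i) (qL j))
  -- (12): ∃*_{≤0}(q_i, q̄_i)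
  | qq3a {i : ℕ} : i ≤ 2*n+1 → GammaMem n (.le 0 (qL i) (qN i))
  | qq3b {i : ℕ} : i ≤ 2*n+1 → GammaMem n (.le 1 (qL i) (qN i))
  -- (13): ∃*_{>1}(q_i, q̄_j), i ≠ j
  | qq4a {i j : ℕ} : i ≤ 2*n+1 → j ≤ 2*n+1 → i ≠ j → GammaMem n (.gt 0 (qL i) (qN j))
  | qq4b {i j : ℕ} : i ≤ 2*n+1 → j ≤ 2*n+1 → i ≠ j → GammaMem n (.gt 1 (qL i) (qN j))
  -- (14): ∃*_{>1}(q̄_i, q̄_j)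
  | qq5a {i j : ℕ} : i ≤ j → j ≤ 2*n+1 → GammaMem n (.gt 0 (qN i) (qN j))
  | qq5b {i j : ℕ} : i ≤ j → j ≤ 2*n+1 → GammaMem n (.gt 1 (qN i) (qN j))
  -- (15): ∃*_{=1}(p_{i+1}, q_i), i even, 0 ≤ i ≤ 2n−2
  | pq1a {i : ℕ} : Even i → i ≤ 2*n-2 → GammaMem n (.gt 0 (pL (i+1)) (qL i))
  | pq1b {i : ℕ} : Even i → i ≤ 2*n-2 → GammaMem n (.le 1 (pL (i+1)) (qL i))
  -- (16): ∃*_{=1}(p_i, q_{i+1}), 0 ≤ i ≤ 2n−1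
  | pq2a {i : ℕ} : i ≤ 2*n-1 → GammaMem n (.gt 0 (pL i) (qL (i+1)))
  | pq2b {i : ℕ} : i ≤ 2*n-1 → GammaMem n (.le 1 (pL i) (qL (i+1)))
  -- (17): ∃*_{=1}(p_i, q_{i+3}), i even, 0 ≤ i ≤ 2n−2
  | pq3a {i : ℕ} : Even i → i ≤ 2*n-2 → GammaMem n (.gt 0 (pL i) (qL (i+3)))
  | pq3b {i : ℕ} : Even i → i ≤ 2*n-2 → GammaMem n (.le 1 (pL i) (qL (i+3)))
  -- (18): ∃*_{>1}(p_i, q_j)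
  | pq4a {i j : ℕ} : i ≤ 2*n-1 → j ≤ 2*n+1 → j ≠ i+1 → (Odd i ∨ j ≠ i+3) →
      (Odd j ∨ i ≠ j+1) → GammaMem n (.gt 0 (pL i) (qL j))
  | pq4b {i j : ℕ} : i ≤ 2*n-1 → j ≤ 2*n+1 → j ≠ i+1 → (Odd i ∨ j ≠ i+3) →
      (Odd j ∨ i ≠ j+1) → GammaMem n (.gt 1 (pL i) (qL j))
  -- (19): ∃*_{≤0}(p_i, q̄_i)
  | pq5a {i : ℕ} : i ≤ 2*n-1 → GammaMem n (.le 0 (pL i) (qN i))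
  | pq5b {i : ℕ} : i ≤ 2*n-1 → GammaMem n (.le 1 (pL i) (qN i))
  -- (20): ∃*_{≤0}(p_i, q̄_{i+2})
  | pq6a {i : ℕ} : i ≤ 2*n-1 → GammaMem n (.le 0 (pL i) (qN (i+2)))
  | pq6b {i : ℕ} : i ≤ 2*n-1 → GammaMem n (.le 1 (pL i) (qN (i+2)))
  -- (21): ∃*_{>1}(p_i, q̄_j), j ≠ i, j ≠ i+2
  | pq7a {i j : ℕ} : i ≤ 2*n-1 → j ≤ 2*n+1 → j ≠ i → j ≠ i+2 → GammaMem n (.gt 0 (pL i) (qN j))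
  | pq7b {i j : ℕ} : i ≤ 2*n-1 → j ≤ 2*n+1 → j ≠ i → j ≠ i+2 → GammaMem n (.gt 1 (pL i) (qN j))
  -- (22): ∃*_{>1}(p̄_i, q_j)
  | pq8a {i j : ℕ} : i ≤ 2*n-1 → j ≤ 2*n+1 → GammaMem n (.gt 0 (pN i) (qL j))
  | pq8b {i j : ℕ} : i ≤ 2*n-1 → j ≤ 2*n+1 → GammaMem n (.gt 1 (pN i) (qL j))
  -- (23): ∃*_{>1}(p̄_i, q̄_j)
  | pq9a {i j : ℕ} : i ≤ 2*n-1 → j ≤ 2*n+1 → GammaMem n (.gt 0 (pN i) (qN j))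
  | pq9b {i j : ℕ} : i ≤ 2*n-1 → j ≤ 2*n+1 → GammaMem n (.gt 1 (pN i) (qN j))
  -- arguments of formulas are unordered
  | symm {φ : Fm SAtom} : GammaMem n φ → GammaMem n φ.swap

/-- The set `Γⁿ`. -/
def Gamma (n : ℕ) : Set (Fm SAtom) := { φ | GammaMem n φ }

/-- The formulas removed from `Γⁿ` to form `Γⁿ_t` (both argument orders). -/
def GammaRem (t : ℕ) : Set (Fm SAtom) :=
  {Fm.gt 0 (pL (2*t-1)) (pL (2*t)), Fm.gt 0 (pL (2*t)) (pL (2*t-1)),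
   Fm.gt 0 (pL (2*t-2)) (pL (2*t+1)), Fm.gt 0 (pL (2*t+1)) (pL (2*t-2)),
   Fm.le 1 (qL (2*t)) (qL (2*t+1)), Fm.le 1 (qL (2*t+1)) (qL (2*t))}

/-- The formulas added to form `Γⁿ_t` (both argument orders). -/
def GammaAdd (t : ℕ) : Set (Fm SAtom) :=
  {Fm.le 0 (pL (2*t-1)) (pL (2*t)), Fm.le 0 (pL (2*t)) (pL (2*t-1)),
   Fm.le 0 (pL (2*t-2)) (pL (2*t+1)), Fm.le 0 (pL (2*t+1)) (pL (2*t-2)),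
   Fm.gt 1 (qL (2*t)) (qL (2*t+1)), Fm.gt 1 (qL (2*t+1)) (qL (2*t))}

/-- The satisfiable variant `Γⁿ_t`. -/
def GammaT (n t : ℕ) : Set (Fm SAtom) := (Gamma n \ GammaRem t) ∪ GammaAdd t
/-- A literal over the atoms `p₀,…,p_{2n−1}, q₀,…,q_{2n+1}`. -/
def goodLit (n : ℕ) (l : Lit SAtom) : Prop :=
  match l.atom with
  | Sum.inl i => i ≤ 2*n-1
  | Sum.inr j => j ≤ 2*n+1


namespace GammaAux

lemma swap_le {n k} {l m : Lit SAtom} (h : Fm.le k m l ∈ Gamma n) :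
    Fm.le k l m ∈ Gamma n := by
  have := GammaMem.symm (n := n) (φ := .le k m l) h
  simpa [Fm.swap, Gamma] using this

lemma swap_gt {n k} {l m : Lit SAtom} (h : Fm.gt k m l ∈ Gamma n) :
    Fm.gt k l m ∈ Gamma n := by
  have := GammaMem.symm (n := n) (φ := .gt k m l) h
  simpa [Fm.swap, Gamma] using this

lemma swap_or {n k} {l m : Lit SAtom}
    (h : Fm.le k m l ∈ Gamma n ∨ Fm.gt k m l ∈ Gamma n) :
    Fm.le k l m ∈ Gamma n ∨ Fm.gt k l m ∈ Gamma n :=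
  h.imp swap_le swap_gt

lemma odd_of_not (i : ℕ) (h : ¬ Even i) : Odd i := Nat.not_even_iff_odd.mp h

lemma keyPP {n : ℕ} (hn : 4 ≤ n) {i j : ℕ} (hij : i ≤ j) (hj : j ≤ 2*n-1)
    {k : ℕ} (hk : k ≤ 1) :
    Fm.le k (pL i) (pL j) ∈ Gamma n ∨ Fm.gt k (pL i) (pL j) ∈ Gamma n := by
  by_cases h1 : j = i + 1
  · subst h1
    interval_cases k
    · exact Or.inr (GammaMem.pp1a (by omega))
    · exact Or.inl (GammaMem.pp1b (by omega))
  by_cases h2 : Even i ∧ j = i + 3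
  · obtain ⟨he, rfl⟩ := h2
    interval_cases k
    · exact Or.inr (GammaMem.pp2a he (by omega))
    · exact Or.inl (GammaMem.pp2b he (by omega))
  by_cases h3 : i = 0 ∧ j = 2*n-1
  · obtain ⟨rfl, rfl⟩ := h3
    interval_cases k
    · exact Or.inl GammaMem.pp3a
    · exact Or.inl GammaMem.pp3b
  · have c2 : Odd i ∨ j ≠ i + 3 := by
      by_cases he : Even i
      · exact Or.inr fun hc => h2 ⟨he, hc⟩
      · exact Or.inl (odd_of_not i he)
    have c3 : i ≠ 0 ∨ j ≠ 2*n-1 := by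
      by_cases h0 : i = 0
      · exact Or.inr fun hc => h3 ⟨h0, hc⟩
      · exact Or.inl h0
    interval_cases k
    · exact Or.inr (GammaMem.pp4a hij hj h1 c2 c3)
    · exact Or.inr (GammaMem.pp4b hij hj h1 c2 c3)

lemma keyPPN {n : ℕ} {i j : ℕ} (hi : i ≤ 2*n-1) (hj : j ≤ 2*n-1)
    {k : ℕ} (hk : k ≤ 1) :
    Fm.le k (pL i) (pN j) ∈ Gamma n ∨ Fm.gt k (pL i) (pN j) ∈ Gamma n := by
  by_cases h1 : i = j
  · subst h1
    interval_cases k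
    · exact Or.inl (GammaMem.pp5a hi)
    · exact Or.inl (GammaMem.pp5b hi)
  · interval_cases k
    · exact Or.inr (GammaMem.pp6a hi hj h1)
    · exact Or.inr (GammaMem.pp6b hi hj h1)

lemma keyPNN {n : ℕ} {i j : ℕ} (hij : i ≤ j) (hj : j ≤ 2*n-1)
    {k : ℕ} (hk : k ≤ 1) :
    Fm.le k (pN i) (pN j) ∈ Gamma n ∨ Fm.gt k (pN i) (pN j) ∈ Gamma n := by
  interval_cases k
  · exact Or.inr (GammaMem.pp7a hij hj)
  · exact Or.inr (GammaMem.pp7b hij hj)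

lemma keyQQ {n : ℕ} {i j : ℕ} (hij : i ≤ j) (hj : j ≤ 2*n+1)
    {k : ℕ} (hk : k ≤ 1) :
    Fm.le k (qL i) (qL j) ∈ Gamma n ∨ Fm.gt k (qL i) (qL j) ∈ Gamma n := by
  by_cases h1 : Even i ∧ j = i + 1
  · obtain ⟨he, rfl⟩ := h1
    interval_cases k
    · exact Or.inr (GammaMem.qq1a he (by omega))
    · exact Or.inl (GammaMem.qq1b he (by omega))
  · have c1 : Odd i ∨ j ≠ i + 1 := by
      by_cases he : Even i
      · exact Or.inr fun hc => h1 ⟨he, hc⟩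
      · exact Or.inl (odd_of_not i he)
    interval_cases k
    · exact Or.inr (GammaMem.qq2a hij hj c1)
    · exact Or.inr (GammaMem.qq2b hij hj c1)

lemma keyQQN {n : ℕ} {i j : ℕ} (hi : i ≤ 2*n+1) (hj : j ≤ 2*n+1)
    {k : ℕ} (hk : k ≤ 1) :
    Fm.le k (qL i) (qN j) ∈ Gamma n ∨ Fm.gt k (qL i) (qN j) ∈ Gamma n := by
  by_cases h1 : i = j
  · subst h1
    interval_cases k
    · exact Or.inl (GammaMem.qq3a hi)
    · exact Or.inl (GammaMem.qq3b hi)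
  · interval_cases k
    · exact Or.inr (GammaMem.qq4a hi hj h1)
    · exact Or.inr (GammaMem.qq4b hi hj h1)

lemma keyQNN {n : ℕ} {i j : ℕ} (hij : i ≤ j) (hj : j ≤ 2*n+1)
    {k : ℕ} (hk : k ≤ 1) :
    Fm.le k (qN i) (qN j) ∈ Gamma n ∨ Fm.gt k (qN i) (qN j) ∈ Gamma n := by
  interval_cases k
  · exact Or.inr (GammaMem.qq5a hij hj)
  · exact Or.inr (GammaMem.qq5b hij hj)

lemma keyPQ {n : ℕ} (hn : 4 ≤ n) {i j : ℕ} (hi : i ≤ 2*n-1) (hj : j ≤ 2*n+1)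
    {k : ℕ} (hk : k ≤ 1) :
    Fm.le k (pL i) (qL j) ∈ Gamma n ∨ Fm.gt k (pL i) (qL j) ∈ Gamma n := by
  by_cases h1 : Even j ∧ i = j + 1
  · obtain ⟨he, rfl⟩ := h1
    interval_cases k
    · exact Or.inr (GammaMem.pq1a he (by omega))
    · exact Or.inl (GammaMem.pq1b he (by omega))
  by_cases h2 : j = i + 1
  · subst h2
    interval_cases k
    · exact Or.inr (GammaMem.pq2a hi)
    · exact Or.inl (GammaMem.pq2b hi)
  by_cases h3 : Even i ∧ j = i + 3
  · obtain ⟨he, rfl⟩ := h3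
    interval_cases k
    · exact Or.inr (GammaMem.pq3a he (by omega))
    · exact Or.inl (GammaMem.pq3b he (by omega))
  · have c2 : Odd i ∨ j ≠ i + 3 := by
      by_cases he : Even i
      · exact Or.inr fun hc => h3 ⟨he, hc⟩
      · exact Or.inl (odd_of_not i he)
    have c3 : Odd j ∨ i ≠ j + 1 := by
      by_cases he : Even j
      · exact Or.inr fun hc => h1 ⟨he, hc⟩
      · exact Or.inl (odd_of_not j he)
    interval_cases k
    · exact Or.inr (GammaMem.pq4a hi hj h2 c2 c3)
    · exact Or.inr (GammaMem.pq4b hi hj h2 c2 c3)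

lemma keyPQN {n : ℕ} {i j : ℕ} (hi : i ≤ 2*n-1) (hj : j ≤ 2*n+1)
    {k : ℕ} (hk : k ≤ 1) :
    Fm.le k (pL i) (qN j) ∈ Gamma n ∨ Fm.gt k (pL i) (qN j) ∈ Gamma n := by
  by_cases h1 : j = i
  · subst h1
    interval_cases k
    · exact Or.inl (GammaMem.pq5a hi)
    · exact Or.inl (GammaMem.pq5b hi)
  by_cases h2 : j = i + 2
  · subst h2
    interval_cases k
    · exact Or.inl (GammaMem.pq6a hi)
    · exact Or.inl (GammaMem.pq6b hi)
  · interval_cases k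
    · exact Or.inr (GammaMem.pq7a hi hj h1 h2)
    · exact Or.inr (GammaMem.pq7b hi hj h1 h2)

lemma keyPNQ {n : ℕ} {i j : ℕ} (hi : i ≤ 2*n-1) (hj : j ≤ 2*n+1)
    {k : ℕ} (hk : k ≤ 1) :
    Fm.le k (pN i) (qL j) ∈ Gamma n ∨ Fm.gt k (pN i) (qL j) ∈ Gamma n := by
  interval_cases k
  · exact Or.inr (GammaMem.pq8a hi hj)
  · exact Or.inr (GammaMem.pq8b hi hj)

lemma keyPNQN {n : ℕ} {i j : ℕ} (hi : i ≤ 2*n-1) (hj : j ≤ 2*n+1)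
    {k : ℕ} (hk : k ≤ 1) :
    Fm.le k (pN i) (qN j) ∈ Gamma n ∨ Fm.gt k (pN i) (qN j) ∈ Gamma n := by
  interval_cases k
  · exact Or.inr (GammaMem.pq9a hi hj)
  · exact Or.inr (GammaMem.pq9b hi hj)

lemma key {n : ℕ} (hn : 4 ≤ n) {k : ℕ} (hk : k ≤ 1) (l m : Lit SAtom)
    (hl : goodLit n l) (hm : goodLit n m) :
    Fm.le k l m ∈ Gamma n ∨ Fm.gt k l m ∈ Gamma n := by
  rcases l with (a | a) | (a | a) <;> rcases m with (b | b) | (b | b) <;>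
    simp only [goodLit, Lit.atom] at hl hm
  · -- pL a, pL b
    rcases le_total a b with h | h
    · exact keyPP hn h hm hk
    · exact swap_or (keyPP hn h hl hk)
  · -- pL a, qL b
    exact keyPQ hn hl hm hk
  · -- pL a, pN b
    exact keyPPN hl hm hk
  · -- pL a, qN b
    exact keyPQN hl hm hk
  · -- qL a, pL b
    exact swap_or (keyPQ hn hm hl hk)
  · -- qL a, qL b
    rcases le_total a b with h | h
    · exact keyQQ h hm hk
    · exact swap_or (keyQQ h hl hk)
  · -- qL a, pN b
    exact swap_or (keyPNQ hm hl hk)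
  · -- qL a, qN b
    exact keyQQN hl hm hk
  · -- pN a, pL b
    exact swap_or (keyPPN hm hl hk)
  · -- pN a, qL b
    exact keyPNQ hl hm hk
  · -- pN a, pN b
    rcases le_total a b with h | h
    · exact keyPNN h hm hk
    · exact swap_or (keyPNN h hl hk)
  · -- pN a, qN b
    exact keyPNQN hl hm hk
  · -- qN a, pL b
    exact swap_or (keyPQN hm hl hk)
  · -- qN a, qL b
    exact swap_or (keyQQN hm hl hk)
  · -- qN a, pN b
    exact swap_or (keyPNQN hm hl hk)
  · -- qN a, qN b
    rcases le_total a b with h | h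
    · exact keyQNN h hm hk
    · exact swap_or (keyQNN h hl hk)

lemma no_abs {n : ℕ} {φ : Fm SAtom} (h : GammaMem n φ) :
    ∀ (i : ℕ) (p : SAtom),
      φ ≠ Fm.gt i (Lit.pos p) (Lit.neg p) ∧ φ ≠ Fm.gt i (Lit.neg p) (Lit.pos p) := by
  induction h with
  | symm h ih =>
      rename_i ψ
      intro i p
      obtain ⟨h1, h2⟩ := ih i p
      rcases ψ with ⟨j, l, m⟩ | ⟨j, l, m⟩ <;> simp_all [Fm.swap, eq_comm, and_comm]
  | _ =>
      intro i p
      constructor <;> (intro h; simp_all [pL, pN, qL, qN]) <;>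
        (obtain ⟨-, rfl, h3⟩ := h; simp_all)
end GammaAux

theorem gamma_complete_and_consistent (n : ℕ) (hn : 4 ≤ n) :
    (∀ φ : Fm SAtom, φ.idx ≤ 1 → goodLit n φ.args.1 → goodLit n φ.args.2 →
        φ ∈ Gamma n ∨ φ.negate ∈ Gamma n) ∧
    (∀ (i : ℕ) (p : SAtom), Fm.gt i (Lit.pos p) (Lit.neg p) ∉ Gamma n) := by
  constructor
  · intro φ hidx h1 h2
    rcases φ with ⟨k, l, m⟩ | ⟨k, l, m⟩
    · simp only [Fm.idx] at hidx
      simp only [Fm.args] at h1 h2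
      exact GammaAux.key hn hidx l m h1 h2
    · simp only [Fm.idx] at hidx
      simp only [Fm.args] at h1 h2
      exact (GammaAux.key hn hidx l m h1 h2).symm
  · intro i p hmem
    exact (GammaAux.no_abs hmem i p).1 rfl
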